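/- The number of labeled rooted trees on a vertex set with n ≥ 1 elements is n^(n-1). -/

import Mathlib

/-- A labeled rooted tree on the vertex set `Fin n`, encoded as a pair `(r, p)` of a root `r`
and a parent function `p` (extended to fix the root).  The condition that `Fin n \ {r}` has no
nonempty `p`-invariant subset is equivalent to: every vertex reaches the root by iterating `p`. -/
def IsRTree (n : ℕ) (rp : Fin n × (Fin n → Fin n)) : Prop :=
  rp.2 rp.1 = rp.1 ∧ ∀ j : Fin n, ∃ k : ℕ, rp.2^[k] j = rp.1

open Function

variable {n : ℕ}

lemma iter_or (f g : Fin n → Fin n) (M : Finset (Fin n))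
    (hM : ∀ x ∈ M, f x ∈ M) (hoff : ∀ x ∉ M, f x = g x) :
    ∀ (j : ℕ) (x : Fin n), f^[j] x ∈ M ∨ f^[j] x = g^[j] x := by
  intro j
  induction j with
  | zero => intro x; right; rfl
  | succ j ih =>
    intro x
    rcases ih x with h | h
    · left; rw [iterate_succ_apply']; exact hM _ h
    · by_cases hm : f^[j] x ∈ M
      · left; rw [iterate_succ_apply']; exact hM _ hm
      · right
        rw [iterate_succ_apply', iterate_succ_apply', h, hoff _ (h ▸ hm)]

open Classical in
noncomputable def cycSet (f : Fin n → Fin n) : Finset (Fin n) :=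
  Finset.univ.filter fun x => ∃ k, 0 < k ∧ f^[k] x = x

lemma mem_cycSet {f : Fin n → Fin n} {x : Fin n} :
    x ∈ cycSet f ↔ ∃ k, 0 < k ∧ f^[k] x = x := by
  simp [cycSet]

lemma cycSet_maps {f : Fin n → Fin n} {x : Fin n} (hx : x ∈ cycSet f) :
    f x ∈ cycSet f := by
  obtain ⟨k, hk, h⟩ := mem_cycSet.mp hx
  exact mem_cycSet.mpr ⟨k, hk, by rw [← iterate_succ_apply, iterate_succ_apply', h]⟩

lemma cycSet_reach (f : Fin n → Fin n) (x : Fin n) : ∃ k, f^[k] x ∈ cycSet f := by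
  have key : ∀ i j, i < j → f^[i] x = f^[j] x → ∃ k, f^[k] x ∈ cycSet f := by
    intro i j hij h
    refine ⟨i, mem_cycSet.mpr ⟨j - i, by omega, ?_⟩⟩
    rw [← iterate_add_apply]
    have : j - i + i = j := by omega
    rw [this]; exact h.symm
  obtain ⟨i, j, hne, h⟩ := Finite.exists_ne_map_eq_of_infinite (fun k : ℕ => f^[k] x)
  rcases lt_or_gt_of_ne hne with hlt | hlt
  · exact key i j hlt h
  · exact key j i hlt h.symm

lemma cycSet_injOn (f : Fin n → Fin n) :
    ∀ x ∈ cycSet f, ∀ y ∈ cycSet f, f x = f y → x = y := by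
  intro x hx y hy hfxy
  obtain ⟨a, ha, hax⟩ := mem_cycSet.mp hx
  obtain ⟨b, hb, hby⟩ := mem_cycSet.mp hy
  have hx' : f^[a * b] x = x := by
    rw [iterate_mul]; exact iterate_fixed hax b
  have hy' : f^[b * a] y = y := by
    rw [iterate_mul]; exact iterate_fixed hby a
  have hab : a * b - 1 + 1 = a * b := by
    have := Nat.mul_pos ha hb; omega
  calc x = f^[a * b] x := hx'.symm
    _ = f^[a * b - 1] (f x) := by conv_lhs => rw [← hab, iterate_succ_apply]
    _ = f^[a * b - 1] (f y) := by rw [hfxy]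
    _ = f^[a * b] y := by rw [← iterate_succ_apply, Nat.succ_eq_add_one, hab]
    _ = y := by rwa [mul_comm] at hy'

def IsForest (M : Finset (Fin n)) (q : Fin n → Fin n) : Prop :=
  (∀ x ∈ M, q x = x) ∧ ∀ x, ∃ k, q^[k] x ∈ M

def FB (n : ℕ) := {Mq : Finset (Fin n) × (Fin n → Fin n) // IsForest Mq.1 Mq.2}

lemma cycSet_image (f : Fin n → Fin n) : (cycSet f).image f = cycSet f := by
  apply Finset.eq_of_subset_of_card_le
  · intro y hy
    obtain ⟨x, hx, rfl⟩ := Finset.mem_image.mp hy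
    exact cycSet_maps hx
  · rw [Finset.card_image_of_injOn (cycSet_injOn f)]

noncomputable def cycPerm (f : Fin n → Fin n) : Equiv.Perm ↥(cycSet f) :=
  Equiv.ofBijective (fun x => ⟨f x.1, cycSet_maps x.2⟩)
    (Finite.injective_iff_bijective.mp fun x y hxy =>
      Subtype.ext (cycSet_injOn f _ x.2 _ y.2 (congrArg Subtype.val hxy)))

@[simp] lemma cycPerm_apply (f : Fin n → Fin n) (x : ↥(cycSet f)) :
    (cycPerm f x : Fin n) = f x := rfl

noncomputable def toForest (f : Fin n → Fin n) : FB n :=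
  ⟨(cycSet f, fun x => if x ∈ cycSet f then x else f x), by
    constructor
    · intro x hx; simp [hx]
    · intro x
      obtain ⟨k, hk⟩ := cycSet_reach f x
      rcases iter_or (fun x => if x ∈ cycSet f then x else f x) f (cycSet f)
        (fun y hy => by simp [hy]) (fun y hy => if_neg hy) k x with h | h
      · exact ⟨k, h⟩
      · exact ⟨k, h ▸ hk⟩⟩

lemma sigma_ext₁ {M M' : Finset (Fin n)} {q q' : Fin n → Fin n} {h : IsForest M q}
    {h' : IsForest M' q'} {σ : Equiv.Perm ↥M} {σ' : Equiv.Perm ↥M'}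
    (hM : M = M') (hq : q = q')
    (hσ : ∀ x (hx : x ∈ M) (hx' : x ∈ M'), (σ ⟨x, hx⟩ : Fin n) = σ' ⟨x, hx'⟩) :
    (⟨⟨(M, q), h⟩, σ⟩ : Σ Mq : FB n, Equiv.Perm ↥Mq.1.1) = ⟨⟨(M', q'), h'⟩, σ'⟩ := by
  subst hM; subst hq
  have hσσ : σ = σ' := Equiv.ext fun x => Subtype.ext (hσ x.1 x.2 x.2)
  subst hσσ; rfl

noncomputable def joyal₁ : (Fin n → Fin n) ≃ Σ Mq : FB n, Equiv.Perm ↥Mq.1.1 where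
  toFun f := ⟨toForest f, cycPerm f⟩
  invFun s := fun x => if h : x ∈ s.1.1.1 then (s.2 ⟨x, h⟩ : Fin n) else s.1.1.2 x
  left_inv f := by
    funext x
    by_cases h : x ∈ cycSet f
    · simp [toForest, h]; rfl
    · simp [toForest, h]
  right_inv := by
    rintro ⟨⟨⟨M, q⟩, hF⟩, σ⟩
    set f : Fin n → Fin n := fun x => if h : x ∈ M then (σ ⟨x, h⟩ : Fin n) else q x with hf
    have hfM : ∀ x (hx : x ∈ M), f x = (σ ⟨x, hx⟩ : Fin n) := fun x hx => dif_pos hx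
    have hfMem : ∀ x ∈ M, f x ∈ M := fun x hx => by rw [hfM x hx]; exact (σ ⟨x, hx⟩).2
    have hfoff : ∀ x ∉ M, f x = q x := fun x hx => dif_neg hx
    -- iterates inside M are given by powers of σ
    have key : ∀ (j : ℕ) (x : Fin n) (hx : x ∈ M), f^[j] x = ((σ ^ j) ⟨x, hx⟩ : Fin n) := by
      intro j
      induction j with
      | zero => intro x hx; simp
      | succ j ih =>
        intro x hx
        rw [Function.iterate_succ_apply', ih x hx,
          hfM _ ((σ ^ j) ⟨x, hx⟩).2]
        have : (⟨((σ ^ j) ⟨x, hx⟩ : Fin n), ((σ ^ j) ⟨x, hx⟩).2⟩ : ↥M) = (σ ^ j) ⟨x, hx⟩ :=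
          rfl
        rw [this, pow_succ']
        rfl
    have hMcyc : cycSet f = M := by
      apply Finset.Subset.antisymm
      · intro x hx
        obtain ⟨k, hk, hkx⟩ := mem_cycSet.mp hx
        by_contra hxM
        obtain ⟨k₀, hk₀⟩ := hF.2 x
        have hin : f^[k₀] x ∈ M := by
          rcases iter_or f q M hfMem hfoff k₀ x with h | h
          · exact h
          · exact h ▸ hk₀
        -- propagate membership forward
        have up : ∀ s, f^[k₀ + s] x ∈ M := by
          intro s
          induction s with
          | zero => exact hin
          | succ s ihs => rw [← Nat.add_assoc, Function.iterate_succ_apply']; exact hfMem _ ihs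
        -- x is periodic, so x itself is in M
        have hper : ∀ t, f^[k * t] x = x := by
          intro t
          rw [Function.iterate_mul]; exact Function.iterate_fixed hkx t
        have : f^[k₀ + (k * (k₀ + 1) - k₀)] x ∈ M := up _
        have hge : k₀ + (k * (k₀ + 1) - k₀) = k * (k₀ + 1) := by
          have : k₀ + 1 ≤ k * (k₀ + 1) := Nat.le_mul_of_pos_left _ hk
          omega
        rw [hge, hper] at this
        exact hxM this
      · intro x hx
        have hpos : 0 < orderOf σ := orderOf_pos σ
        exact mem_cycSet.mpr ⟨orderOf σ, hpos, by
          rw [key _ x hx, pow_orderOf_eq_one]; rfl⟩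
    refine sigma_ext₁ hMcyc ?_ ?_
    · funext x
      show (if x ∈ cycSet f then x else f x) = q x
      rw [hMcyc]
      by_cases h : x ∈ M
      · rw [if_pos h]; exact (hF.1 x h).symm
      · rw [if_neg h, hfoff x h]
    · intro x hx hx'
      simp only [cycPerm_apply]
      exact hfM x hx'

section Path

variable {p : Fin n → Fin n} {r v : Fin n}

lemma p_after (hr : p r = r) (hv : ∃ k, p^[k] v = r) {s : ℕ} (hs : Nat.find hv ≤ s) :
    p^[s] v = r := by
  have : s - Nat.find hv + Nat.find hv = s := by omega
  rw [← this, iterate_add_apply, Nat.find_spec hv]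
  exact iterate_fixed hr _

lemma p_inj (hr : p r = r) (hv : ∃ k, p^[k] v = r) :
    ∀ i ≤ Nat.find hv, ∀ j ≤ Nat.find hv, p^[i] v = p^[j] v → i = j := by
  have H : ∀ i j, i < j → j ≤ Nat.find hv → p^[i] v ≠ p^[j] v := by
    intro i j hij hj heq
    set d := j - i with hd
    have hid : i + d = j := by omega
    have hrep : ∀ t, p^[i + t * d] v = p^[i] v := by
      intro t
      induction t with
      | zero => simp
      | succ t iht =>
        have h2 : i + (t + 1) * d = d + (i + t * d) := by ring
        rw [h2, iterate_add_apply, iht, ← iterate_add_apply, Nat.add_comm d i, hid]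
        exact heq.symm
    have hbig : Nat.find hv ≤ i + Nat.find hv * d := by
      have hd1 : 1 ≤ d := by omega
      calc Nat.find hv ≤ Nat.find hv * d := Nat.le_mul_of_pos_right _ (by omega)
        _ ≤ i + Nat.find hv * d := by omega
    have := p_after hr hv hbig
    rw [hrep] at this
    exact Nat.find_min hv (by omega : i < Nat.find hv) this
  intro i hi j hj heq
  rcases Nat.lt_trichotomy i j with h | h | h
  · exact absurd heq (H i j h hj)
  · exact h
  · exact absurd heq.symm (H j i h hi)

/-- The path from `v` to the root, as a finset. -/
noncomputable def pM (hv : ∃ k, p^[k] v = r) : Finset (Fin n) :=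
  (Finset.range (Nat.find hv + 1)).image fun i => p^[i] v

lemma mem_pM {hv : ∃ k, p^[k] v = r} {x : Fin n} :
    x ∈ pM hv ↔ ∃ i ≤ Nat.find hv, p^[i] v = x := by
  simp [pM, Nat.lt_succ_iff]

lemma pM_card (hr : p r = r) (hv : ∃ k, p^[k] v = r) : (pM hv).card = Nat.find hv + 1 := by
  rw [pM, Finset.card_image_of_injOn, Finset.card_range]
  intro i hi j hj heq
  exact p_inj hr hv i (Nat.lt_succ_iff.mp (Finset.mem_range.mp hi)) j
    (Nat.lt_succ_iff.mp (Finset.mem_range.mp hj)) heq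

lemma r_mem_pM (hv : ∃ k, p^[k] v = r) : r ∈ pM hv :=
  mem_pM.mpr ⟨Nat.find hv, le_rfl, Nat.find_spec hv⟩

lemma v_mem_pM (hv : ∃ k, p^[k] v = r) : v ∈ pM hv :=
  mem_pM.mpr ⟨0, Nat.zero_le _, rfl⟩

/-- The forest function obtained by cutting the path. -/
noncomputable def pQ (hv : ∃ k, p^[k] v = r) : Fin n → Fin n :=
  fun x => if x ∈ pM hv then x else p x

lemma pForest (hv : ∃ k, p^[k] v = r) (hreach : ∀ j, ∃ k, p^[k] j = r) :
    IsForest (pM hv) (pQ hv) := by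
  constructor
  · intro x hx; simp [pQ, hx]
  · intro x
    obtain ⟨k, hk⟩ := hreach x
    rcases iter_or (pQ hv) p (pM hv) (fun y hy => by simp [pQ, hy])
      (fun y hy => if_neg hy) k x with h | h
    · exact ⟨k, h⟩
    · exact ⟨k, by rw [h, hk]; exact r_mem_pM hv⟩

/-- The ordering of the path. -/
noncomputable def pL (hr : p r = r) (hv : ∃ k, p^[k] v = r) :
    Fin ((pM hv).card) ≃ ↥(pM hv) :=
  (finCongr (pM_card hr hv)).trans <| Equiv.ofBijective
    (fun i => ⟨p^[(i : ℕ)] v, mem_pM.mpr ⟨i, Nat.lt_succ_iff.mp i.2, rfl⟩⟩)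
    ((Fintype.bijective_iff_injective_and_card _).mpr
      ⟨fun i j hij => Fin.ext (p_inj hr hv i (Nat.lt_succ_iff.mp i.2) j
          (Nat.lt_succ_iff.mp j.2) (congrArg Subtype.val hij)),
        by simp [Fintype.card_coe, pM_card hr hv]⟩)

@[simp] lemma pL_apply (hr : p r = r) (hv : ∃ k, p^[k] v = r) (i : Fin (pM hv).card) :
    (pL hr hv i : Fin n) = p^[(i : ℕ)] v := rfl

end Path

section Back

variable {M : Finset (Fin n)}

/-- Parent function built from a forest `q` and an ordering `ℓ` of `M` (path to the root). -/
noncomputable def bP (ℓ : Fin M.card ≃ ↥M) (q : Fin n → Fin n) : Fin n → Fin n :=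
  fun x =>
    if h : x ∈ M then
      if hi : ((ℓ.symm ⟨x, h⟩ : Fin M.card) : ℕ) + 1 < M.card then
        (ℓ ⟨((ℓ.symm ⟨x, h⟩ : Fin M.card) : ℕ) + 1, hi⟩ : Fin n)
      else x
    else q x

lemma bP_off (ℓ : Fin M.card ≃ ↥M) (q : Fin n → Fin n) {x : Fin n} (h : x ∉ M) :
    bP ℓ q x = q x := dif_neg h

lemma bP_mem (ℓ : Fin M.card ≃ ↥M) (q : Fin n → Fin n) {x : Fin n} (h : x ∈ M) :
    bP ℓ q x ∈ M := by
  rw [bP, dif_pos h]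
  split
  · exact (ℓ _).2
  · exact h

lemma bP_at (ℓ : Fin M.card ≃ ↥M) (q : Fin n → Fin n) {i : ℕ} (hi : i < M.card)
    (hi1 : i + 1 < M.card) : bP ℓ q (ℓ ⟨i, hi⟩) = (ℓ ⟨i + 1, hi1⟩ : Fin n) := by
  rw [bP, dif_pos (ℓ ⟨i, hi⟩).2]
  have he : (⟨((ℓ ⟨i, hi⟩ : ↥M) : Fin n), (ℓ ⟨i, hi⟩).2⟩ : ↥M) = ℓ ⟨i, hi⟩ := rfl
  rw [he, Equiv.symm_apply_apply]
  exact dif_pos hi1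

lemma bP_last (ℓ : Fin M.card ≃ ↥M) (q : Fin n → Fin n) {j : ℕ} (hj : j < M.card)
    (hj1 : j + 1 = M.card) : bP ℓ q (ℓ ⟨j, hj⟩) = (ℓ ⟨j, hj⟩ : Fin n) := by
  rw [bP, dif_pos (ℓ _).2]
  have he : (⟨((ℓ ⟨j, hj⟩ : ↥M) : Fin n), (ℓ _).2⟩ : ↥M) = ℓ ⟨j, hj⟩ := rfl
  rw [he, Equiv.symm_apply_apply]
  have hneg : ¬(((⟨j, hj⟩ : Fin M.card) : ℕ) + 1 < M.card) := by
    simp only [Fin.val_mk]; omega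
  exact dif_neg hneg

lemma bP_climb (ℓ : Fin M.card ≃ ↥M) (q : Fin n → Fin n) (hm : 0 < M.card) :
    ∀ (d j : ℕ) (hjd : j + d = M.card - 1) (hj : j < M.card),
      (bP ℓ q)^[d] (ℓ ⟨j, hj⟩) = (ℓ ⟨M.card - 1, by omega⟩ : Fin n) := by
  intro d
  induction d with
  | zero =>
    intro j hjd hj
    simp only [Function.iterate_zero, id_eq]
    have : (⟨j, hj⟩ : Fin M.card) = ⟨M.card - 1, by omega⟩ := Fin.ext (by simp; omega)
    rw [this]
  | succ d ih =>
    intro j hjd hj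
    have hj1 : j + 1 < M.card := by omega
    rw [Function.iterate_succ_apply, bP_at ℓ q hj hj1, ih (j + 1) (by omega) hj1]

lemma bP_reach (ℓ : Fin M.card ≃ ↥M) (q : Fin n → Fin n) (hm : 0 < M.card)
    (hF : IsForest M q) (x : Fin n) :
    ∃ k, (bP ℓ q)^[k] x = (ℓ ⟨M.card - 1, by omega⟩ : Fin n) := by
  obtain ⟨k, hk⟩ := hF.2 x
  have hin : (bP ℓ q)^[k] x ∈ M := by
    rcases iter_or (bP ℓ q) q M (fun y hy => bP_mem ℓ q hy)
      (fun y hy => bP_off ℓ q hy) k x with h | h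
    · exact h
    · exact h ▸ hk
  set y : ↥M := ⟨(bP ℓ q)^[k] x, hin⟩ with hy
  set j : Fin M.card := ℓ.symm y with hj
  refine ⟨k + (M.card - 1 - (j : ℕ)), ?_⟩
  rw [Nat.add_comm, iterate_add_apply]
  have hyx : (bP ℓ q)^[k] x = (ℓ ⟨(j : ℕ), j.2⟩ : Fin n) := by
    have : ℓ ⟨(j : ℕ), j.2⟩ = y := by rw [hj]; simp
    rw [this]
  rw [hyx, bP_climb ℓ q hm _ _ (by have := j.2; omega) j.2]

end Back

lemma forest_card_pos {M : Finset (Fin n)} {q : Fin n → Fin n} (hF : IsForest M q)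
    (hn : 0 < n) : 0 < M.card := by
  obtain ⟨k, hk⟩ := hF.2 ⟨0, hn⟩
  exact Finset.card_pos.mpr ⟨_, hk⟩

lemma sigma_ext₂ {M M' : Finset (Fin n)} {q q' : Fin n → Fin n} {h : IsForest M q}
    {h' : IsForest M' q'} {ℓ : Fin M.card ≃ ↥M} {ℓ' : Fin M'.card ≃ ↥M'}
    (hM : M = M') (hq : q = q')
    (hℓ : ∀ (i : ℕ) (hi : i < M.card) (hi' : i < M'.card),
      (ℓ ⟨i, hi⟩ : Fin n) = ℓ' ⟨i, hi'⟩) :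
    (⟨⟨(M, q), h⟩, ℓ⟩ : Σ Mq : FB n, Fin Mq.1.1.card ≃ ↥Mq.1.1) = ⟨⟨(M', q'), h'⟩, ℓ'⟩ := by
  subst hM; subst hq
  have hℓℓ : ℓ = ℓ' := Equiv.ext fun i => Subtype.ext (hℓ i.1 i.2 i.2)
  subst hℓℓ; rfl

noncomputable def j2to (x : Fin n × {rp : Fin n × (Fin n → Fin n) // IsRTree n rp}) :
    Σ Mq : FB n, Fin Mq.1.1.card ≃ ↥Mq.1.1 :=
  ⟨⟨(pM (x.2.2.2 x.1), pQ (x.2.2.2 x.1)), pForest (x.2.2.2 x.1) x.2.2.2⟩,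
    pL x.2.2.1 (x.2.2.2 x.1)⟩

noncomputable def j2inv (hn : 0 < n) (s : Σ Mq : FB n, Fin Mq.1.1.card ≃ ↥Mq.1.1) :
    Fin n × {rp : Fin n × (Fin n → Fin n) // IsRTree n rp} :=
  ((s.2 ⟨0, forest_card_pos s.1.2 hn⟩ : Fin n),
    ⟨((s.2 ⟨s.1.1.1.card - 1, Nat.sub_lt (forest_card_pos s.1.2 hn) Nat.one_pos⟩ : Fin n),
      bP s.2 s.1.1.2),
      bP_last s.2 s.1.1.2 (Nat.sub_lt (forest_card_pos s.1.2 hn) Nat.one_pos)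
        (Nat.succ_pred_eq_of_pos (forest_card_pos s.1.2 hn)),
      (fun j => bP_reach s.2 s.1.1.2 (forest_card_pos s.1.2 hn) s.1.2 j)⟩)

set_option maxHeartbeats 1000000 in

set_option maxHeartbeats 400000 in
lemma j2_left (hn : 0 < n) (x : Fin n × {rp : Fin n × (Fin n → Fin n) // IsRTree n rp}) :
    j2inv hn (j2to x) = x := by
  obtain ⟨v, ⟨⟨r, p⟩, hT⟩⟩ := x
  obtain ⟨hr, hreach⟩ := hT
  have hv : ∃ k, p^[k] v = r := hreach v
  have hmc : (pM hv).card = Nat.find hv + 1 := pM_card hr hv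
  have h1 : (pL hr hv ⟨0, by omega⟩ : Fin n) = v := by rw [pL_apply]; rfl
  have h2 : (pL hr hv ⟨(pM hv).card - 1, by omega⟩ : Fin n) = r := by
    rw [pL_apply]
    show p^[(pM hv).card - 1] v = r
    have hc1 : (pM hv).card - 1 = Nat.find hv := by omega
    rw [hc1]
    exact Nat.find_spec hv
  have h3 : bP (pL hr hv) (pQ hv) = p := by
    funext x
    by_cases h : x ∈ pM hv
    · obtain ⟨i, hiK, hix⟩ := mem_pM.mp h
      have hi' : i < (pM hv).card := by omega
      have hx : x = (pL hr hv ⟨i, hi'⟩ : Fin n) := by rw [pL_apply]; exact hix.symm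
      by_cases hi1 : i + 1 < (pM hv).card
      · rw [hx, bP_at (M := pM hv) (pL hr hv) (pQ hv) hi' hi1, pL_apply, pL_apply]
        show p^[i + 1] v = p (p^[i] v)
        exact Function.iterate_succ_apply' p i v
      · have hiK' : i = Nat.find hv := by omega
        have hxr : x = r := by rw [← hix, hiK']; exact Nat.find_spec hv
        have hr' : p r = r := hr
        have hi1' : i + 1 = (pM hv).card := by omega
        rw [hx, bP_last (M := pM hv) (pL hr hv) (pQ hv) hi' hi1', ← hx, hxr, hr']
    · rw [bP_off (M := pM hv) _ _ h]
      exact if_neg h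
  exact Prod.ext h1 (Subtype.ext (Prod.ext h2 h3))

set_option maxHeartbeats 400000 in
lemma j2_right (hn : 0 < n) (s : Σ Mq : FB n, Fin Mq.1.1.card ≃ ↥Mq.1.1) :
    j2to (j2inv hn s) = s := by
  obtain ⟨⟨⟨M, q⟩, hF⟩, ℓ⟩ := s
  have hF' : IsForest M q := hF
  have hm : 0 < M.card := forest_card_pos hF' hn
  set v : Fin n := (ℓ ⟨0, hm⟩ : Fin n) with hvdef
  set rt : Fin n := (ℓ ⟨M.card - 1, show M.card - 1 < M.card by omega⟩ : Fin n) with hrdef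
  set p : Fin n → Fin n := bP ℓ q with hpdef
  have claimB : ∀ (i : ℕ) (hi : i < M.card), p^[i] v = (ℓ ⟨i, hi⟩ : Fin n) := by
    intro i
    induction i with
    | zero => intro hi; rfl
    | succ i ih =>
      intro hi
      rw [Function.iterate_succ_apply', ih (by omega)]
      exact bP_at (M := M) ℓ q (by omega) hi
  have hv : ∃ k, p^[k] v = rt := ⟨M.card - 1, claimB _ (by omega)⟩
  have hK : Nat.find hv = M.card - 1 := by
    have hle : Nat.find hv ≤ M.card - 1 := Nat.find_min' hv (claimB _ (by omega))
    rcases Nat.lt_or_ge (Nat.find hv) (M.card - 1) with hlt | hge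
    · exfalso
      have hs := Nat.find_spec hv
      rw [claimB (Nat.find hv) (by omega)] at hs
      have h2 := ℓ.injective (Subtype.ext hs)
      have h3 := congrArg Fin.val h2
      simp only [Fin.val_mk] at h3
      omega
    · omega
  have hMM : pM hv = M := by
    ext x
    rw [mem_pM]
    constructor
    · rintro ⟨i, hiK, rfl⟩
      have hilt : i < M.card := by omega
      rw [claimB i hilt]
      exact (ℓ ⟨i, hilt⟩).2
    · intro hx
      have hlt : ((ℓ.symm ⟨x, hx⟩ : Fin M.card) : ℕ) < M.card := (ℓ.symm ⟨x, hx⟩).2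
      have hle : ((ℓ.symm ⟨x, hx⟩ : Fin M.card) : ℕ) ≤ Nat.find hv := by omega
      refine ⟨((ℓ.symm ⟨x, hx⟩ : Fin M.card) : ℕ), hle, ?_⟩
      rw [claimB _ hlt]
      simp
  have hQQ : pQ hv = q := by
    funext x
    show (if x ∈ pM hv then x else p x) = q x
    rw [hMM]
    by_cases h : x ∈ M
    · rw [if_pos h]; exact (hF'.1 x h).symm
    · rw [if_neg h]; exact bP_off (M := M) ℓ q h
  refine sigma_ext₂ hMM hQQ ?_
  intro i hi hi'
  rw [pL_apply]
  show p^[i] v = (ℓ ⟨i, hi'⟩ : Fin n)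
  exact claimB i hi'

noncomputable def joyal₂ (hn : 0 < n) :
    (Fin n × {rp : Fin n × (Fin n → Fin n) // IsRTree n rp}) ≃
      Σ Mq : FB n, Fin Mq.1.1.card ≃ ↥Mq.1.1 :=
  ⟨j2to, j2inv hn, j2_left hn, j2_right hn⟩

/-- Cayley's formula: the number of labeled rooted trees on an `n`-element vertex set
is `n ^ (n - 1)`. -/
theorem cayley (n : ℕ) (hn : 1 ≤ n) :
    Nat.card {rp : Fin n × (Fin n → Fin n) // IsRTree n rp} = n ^ (n - 1) := by
  have hn' : 0 < n := hn
  have E : (Fin n → Fin n) ≃ Fin n × {rp : Fin n × (Fin n → Fin n) // IsRTree n rp} :=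
    joyal₁.trans ((Equiv.sigmaCongrRight fun Mq : FB n =>
      ((Finset.equivFin Mq.1.1).equivCongr (Equiv.refl ↥Mq.1.1))).trans (joyal₂ hn').symm)
  have hcard := Nat.card_congr E
  rw [Nat.card_prod] at hcard
  have h1 : Nat.card (Fin n → Fin n) = n ^ n := by
    simp [Nat.card_eq_fintype_card]
  have h2 : Nat.card (Fin n) = n := by simp
  rw [h1, h2] at hcard
  have hpow : n ^ n = n * n ^ (n - 1) := by
    have h3 : n - 1 + 1 = n := by omega
    calc n ^ n = n ^ (n - 1 + 1) := by rw [h3]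
      _ = n ^ (n - 1) * n := pow_succ n (n - 1)
      _ = n * n ^ (n - 1) := Nat.mul_comm _ _
  rw [hpow] at hcard
  exact (Nat.eq_of_mul_eq_mul_left hn' hcard).symm
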